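/- Let F₂ = ⟨a,b⟩ be free of rank 2, H = ⟨ba, ab²a⁻¹⟩ and g = a. Write h₁ = ba, h₂ = ab²a⁻¹. Then the ideal I_g = ker φ_g ⊆ H * ⟨x⟩ is generated as a normal subgroup by the single equation x⁻¹ h₂ x x h₁⁻¹ x h₁⁻¹ (of degree 4); in particular, every equation in I_g has even degree. -/

import Mathlib

set_option maxHeartbeats 1000000

open scoped Pointwise


open Monoid
open scoped Monoid.Coprod

/-- The generator `x` of the infinite cyclic group `⟨x⟩ = Multiplicative ℤ`. -/
def xgen : Multiplicative ℤ := Multiplicative.ofAdd 1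

/-- An alternating expression `h₀ · x^{β₁} c₁ · x^{β₂} c₂ ⋯ x^{β_m} c_m` in `H ∗ ⟨x⟩`,
recorded by the head coefficient `h₀` and the list `l = [(β₁,c₁),…,(β_m,c_m)]`. -/
def coprodExpr {H : Type*} [Group H] (h₀ : H) (l : List (ℤ × H)) : H ∗ Multiplicative ℤ :=
  Coprod.inl h₀ * (l.map fun p => Coprod.inr (xgen ^ p.1) * Coprod.inl p.2).prod

/-- The degree of an equation `w ∈ H ∗ ⟨x⟩`: the number of occurrences of `x` and `x⁻¹`
in the cyclic reduction of `w`.  Equivalently (and this is how we formalize it), it is the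
minimum, over all elements conjugate to `w` and over all ways of writing such a conjugate as
an alternating expression `h₀ x^{β₁} c₁ ⋯ x^{β_m} c_m`, of the total number `∑ᵢ |βᵢ|` of
occurrences of `x^{±1}`; this minimum is achieved exactly by the cyclic reduction of `w`. -/
noncomputable def degree {H : Type*} [Group H] (w : H ∗ Multiplicative ℤ) : ℕ :=
  sInf { n | ∃ (c : H ∗ Multiplicative ℤ) (h₀ : H) (l : List (ℤ × H)),
      c * w * c⁻¹ = coprodExpr h₀ l ∧ (l.map fun p => p.1.natAbs).sum = n }

/-- in `F₂ = ⟨a,b⟩` with `H = ⟨h₁,h₂⟩`, `h₁ = ba`, `h₂ = ab²a⁻¹`, and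
`g = a`, the ideal `I_g = ker φ_g` is the normal closure of the single equation
`x⁻¹ h₂ x x h₁⁻¹ x h₁⁻¹`, which has degree 4; in particular every equation in `I_g` has
even degree. -/
lemma coprodExpr_nil {H : Type*} [Group H] (h₀ : H) : coprodExpr h₀ [] = Coprod.inl h₀ := by
  simp [coprodExpr]

lemma coprodExpr_cons {H : Type*} [Group H] (h₀ c : H) (β : ℤ) (l : List (ℤ × H)) :
    coprodExpr h₀ ((β, c) :: l) = Coprod.inl h₀ * Coprod.inr (xgen ^ β) * coprodExpr c l := by
  simp [coprodExpr, mul_assoc]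

lemma lift_one_coprodExpr {H M : Type*} [Group H] [CommGroup M] (e : Multiplicative ℤ →* M)
    (h₀ : H) (l : List (ℤ × H)) :
    (Coprod.lift 1 e) (coprodExpr h₀ l) = e (xgen ^ (l.map Prod.fst).sum) := by
  induction l generalizing h₀ with
  | nil => simp [coprodExpr_nil, Coprod.lift_apply_inl]
  | cons p l ih =>
    obtain ⟨β, c⟩ := p
    rw [coprodExpr_cons, map_mul, map_mul, Coprod.lift_apply_inl, Coprod.lift_apply_inr, ih]
    simp [zpow_add]

lemma natAbs_sum_le (l : List ℤ) : l.sum.natAbs ≤ (l.map Int.natAbs).sum := by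
  induction l with
  | nil => simp
  | cons a l ih =>
    simp only [List.sum_cons, List.map_cons]
    calc (a + l.sum).natAbs ≤ a.natAbs + l.sum.natAbs := Int.natAbs_add_le _ _
      _ ≤ _ := by omega

lemma even_natAbs_sum (l : List ℤ) : Even ((l.map Int.natAbs).sum) ↔ Even l.sum := by
  induction l with
  | nil => simp
  | cons a l ih =>
    simp only [List.sum_cons, List.map_cons]
    rw [Nat.even_add, Int.even_add, ih, Int.natAbs_even]

def permA : Equiv.Perm (Fin 5) := ⟨![4,3,2,0,1], ![3,4,2,1,0], by decide, by decide⟩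
def permB : Equiv.Perm (Fin 5) := ⟨![1,2,4,3,0], ![4,0,1,3,2], by decide, by decide⟩
def P1 : Finset (Fin 5) := {2, 4}
def P2 : Finset (Fin 5) := {1, 2, 3, 4}

def permRep : FreeGroup Bool →* Equiv.Perm (Fin 5) :=
  FreeGroup.lift (fun t => if t then permA else permB)

lemma permRep_true : permRep (FreeGroup.of true) = permA := by simp [permRep]
lemma permRep_false : permRep (FreeGroup.of false) = permB := by simp [permRep]

theorem stmt9 (a b : FreeGroup Bool) (ha : a = FreeGroup.of true) (hb : b = FreeGroup.of false)
    (H : Subgroup (FreeGroup Bool)) (hHdef : H = Subgroup.closure {b * a, a * b * b * a⁻¹})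
    (h₁ h₂ : ↥H) (hh₁ : (h₁ : FreeGroup Bool) = b * a) (hh₂ : (h₂ : FreeGroup Bool) = a * b * b * a⁻¹)
    (φ : ↥H ∗ Multiplicative ℤ →* FreeGroup Bool)
    (hφ : φ = Coprod.lift H.subtype (zpowersHom (FreeGroup Bool) a))
    (w₀ : ↥H ∗ Multiplicative ℤ)
    (hw₀ : w₀ = (Coprod.inr xgen)⁻¹ * Coprod.inl h₂ * Coprod.inr xgen * Coprod.inr xgen *
      (Coprod.inl h₁)⁻¹ * Coprod.inr xgen * (Coprod.inl h₁)⁻¹) :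
    Subgroup.normalClosure {w₀} = φ.ker ∧ degree w₀ = 4 ∧
      ∀ w ∈ φ.ker, Even (degree w) := by
  subst hHdef
  -- basic computations for φ
  have hφinl : ∀ h, φ (Coprod.inl h) = (↑h : FreeGroup Bool) := fun h => by
    rw [hφ, Coprod.lift_apply_inl]; rfl
  have hφinr : φ (Coprod.inr xgen) = a := by
    rw [hφ, Coprod.lift_apply_inr, zpowersHom_apply]
    show a ^ (1 : ℤ) = a
    exact zpow_one a
  have hφxpow : ∀ β : ℤ, φ (Coprod.inr (xgen ^ β)) = a ^ β := fun β => by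
    rw [map_zpow, map_zpow, hφinr]
  have hφw₀ : φ w₀ = 1 := by
    rw [hw₀]
    simp only [map_mul, map_inv, hφinl, hφinr, hh₁, hh₂]
    group
  -- Part A: normal closure equals kernel
  have hNle : Subgroup.normalClosure {w₀} ≤ φ.ker :=
    Subgroup.normalClosure_le_normal
      (by rw [Set.singleton_subset_iff]; exact MonoidHom.mem_ker.mpr hφw₀)
  set π := QuotientGroup.mk' (Subgroup.normalClosure {w₀}) with hπdef
  set ψ := FreeGroup.lift (fun t => cond t (π (Coprod.inr xgen))
      (π (Coprod.inl h₁ * (Coprod.inr xgen)⁻¹))) with hψdef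
  have hψa : ψ a = π (Coprod.inr xgen) :=
    (congrArg ψ ha).trans (by rw [hψdef]; simp)
  have hψb : ψ b = π (Coprod.inl h₁ * (Coprod.inr xgen)⁻¹) :=
    (congrArg ψ hb).trans (by rw [hψdef]; simp)
  have hπw : π w₀ = 1 := by
    rw [hπdef, QuotientGroup.mk'_apply]
    exact (QuotientGroup.eq_one_iff w₀).mpr
      (Subgroup.subset_normalClosure (Set.mem_singleton _))
  have hcomp : ψ.comp φ = π := by
    apply Coprod.hom_ext
    · apply MonoidHom.ext
      intro h
      simp only [MonoidHom.comp_apply]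
      rw [hφinl]
      obtain ⟨g, hg⟩ := h
      show ψ g = π (Coprod.inl ⟨g, hg⟩)
      induction hg using Subgroup.closure_induction with
      | mem x hx =>
        simp only [Set.mem_insert_iff, Set.mem_singleton_iff] at hx
        rcases hx with rfl | rfl
        · have key : ∀ hm : b * a ∈ Subgroup.closure {b * a, a * b * b * a⁻¹},
              π (Coprod.inl ⟨b * a, hm⟩) = π (Coprod.inl h₁) := fun hm =>
            congrArg π (congrArg Coprod.inl (Subtype.ext hh₁.symm))
          refine Eq.trans ?_ (key _).symm
          rw [map_mul, hψb, hψa, ← map_mul, inv_mul_cancel_right]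
        · have key : ∀ hm : a * b * b * a⁻¹ ∈ Subgroup.closure {b * a, a * b * b * a⁻¹},
              π (Coprod.inl ⟨a * b * b * a⁻¹, hm⟩) = π (Coprod.inl h₂) := fun hm =>
            congrArg π (congrArg Coprod.inl (Subtype.ext hh₂.symm))
          refine Eq.trans ?_ (key _).symm
          rw [map_mul ψ, map_mul ψ, map_mul ψ, map_inv ψ, hψa, hψb, map_mul π, map_inv π]
          have hpre : π ((Coprod.inr xgen)⁻¹ * Coprod.inl h₂ * Coprod.inr xgen *
              Coprod.inr xgen * (Coprod.inl h₁)⁻¹ * Coprod.inr xgen * (Coprod.inl h₁)⁻¹)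
              = 1 := by rw [← hw₀]; exact hπw
          have hrel : (π (Coprod.inr xgen))⁻¹ * π (Coprod.inl h₂) * π (Coprod.inr xgen) *
              π (Coprod.inr xgen) * (π (Coprod.inl h₁))⁻¹ * π (Coprod.inr xgen) *
              (π (Coprod.inl h₁))⁻¹ = 1 := by
            simpa only [map_mul, map_inv] using hpre
          set X := π (Coprod.inr xgen)
          set T := π (Coprod.inl h₁)
          set T₂ := π (Coprod.inl h₂)
          have h2 : T₂ = X * ((X⁻¹ * T₂ * X * X * T⁻¹ * X * T⁻¹) * (T * X⁻¹ * T * X⁻¹)) * X⁻¹ := by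
            group
          rw [hrel, one_mul] at h2
          rw [h2]
          group
      | one =>
        have key : ∀ hm : (1 : FreeGroup Bool) ∈ Subgroup.closure {b * a, a * b * b * a⁻¹},
            π (Coprod.inl ⟨1, hm⟩) = 1 := fun hm =>
          (congrArg (fun u => π (Coprod.inl u)) (Subtype.ext rfl :
            (⟨1, hm⟩ : ↥(Subgroup.closure {b * a, a * b * b * a⁻¹})) = 1)).trans
            (by rw [map_one, map_one])
        refine Eq.trans ?_ (key _).symm
        rw [map_one]
      | mul x y hx hy ihx ihy =>
        rw [map_mul, ihx, ihy, ← map_mul, ← map_mul]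
        exact congrArg (fun u => π (Coprod.inl u)) (Subtype.ext rfl)
      | inv x hx ihx =>
        rw [map_inv, ihx, ← map_inv, ← map_inv]
        exact congrArg (fun u => π (Coprod.inl u)) (Subtype.ext rfl)
    · apply MonoidHom.ext_mint
      simp only [MonoidHom.comp_apply]
      show ψ (φ (Coprod.inr xgen)) = π (Coprod.inr xgen)
      rw [hφinr, hψa]
  have hkerN : Subgroup.normalClosure {w₀} = φ.ker := by
    apply le_antisymm hNle
    intro w hw
    have h1 : ψ (φ w) = π w := by
      have := DFunLike.congr_fun hcomp w
      simpa using this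
    have h2 : π w = 1 := by
      rw [← h1, MonoidHom.mem_ker.mp hw, map_one]
    rw [hπdef, QuotientGroup.mk'_apply] at h2
    exact (QuotientGroup.eq_one_iff w).mp h2
  -- permutation representation facts
  have hpA : permRep a = permA := by rw [ha]; exact permRep_true
  have hpB : permRep b = permB := by rw [hb]; exact permRep_false
  have hHstab : ∀ h : ↥(Subgroup.closure {b * a, a * b * b * a⁻¹}),
      permRep ↑h 0 = 0 ∧ (∀ q, q ∈ P1 → permRep ↑h q ∈ P1) ∧
      (∀ q, q ∈ P2 → permRep ↑h q ∈ P2) := by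
    have hle : Subgroup.closure {b * a, a * b * b * a⁻¹} ≤ Subgroup.comap permRep
        ((MulAction.stabilizer (Equiv.Perm (Fin 5)) (0 : Fin 5) ⊓
          MulAction.stabilizer (Equiv.Perm (Fin 5)) P1) ⊓
          MulAction.stabilizer (Equiv.Perm (Fin 5)) P2) := by
      rw [Subgroup.closure_le]
      rintro g hg
      simp only [Set.mem_insert_iff, Set.mem_singleton_iff] at hg
      rcases hg with rfl | rfl
      · simp only [SetLike.mem_coe, Subgroup.mem_comap, map_mul, hpA, hpB]
        refine Subgroup.mem_inf.mpr ⟨Subgroup.mem_inf.mpr ⟨?_, ?_⟩, ?_⟩ <;>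
          rw [MulAction.mem_stabilizer_iff] <;> decide
      · simp only [SetLike.mem_coe, Subgroup.mem_comap, map_mul, map_inv, hpA, hpB]
        refine Subgroup.mem_inf.mpr ⟨Subgroup.mem_inf.mpr ⟨?_, ?_⟩, ?_⟩ <;>
          rw [MulAction.mem_stabilizer_iff] <;> decide
    intro h
    have hm := hle h.2
    rw [Subgroup.mem_comap] at hm
    obtain ⟨hs01, hs2⟩ := Subgroup.mem_inf.mp hm
    obtain ⟨hs0, hs1⟩ := Subgroup.mem_inf.mp hs01
    rw [MulAction.mem_stabilizer_iff] at hs0 hs1 hs2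
    refine ⟨hs0, fun q hq => ?_, fun q hq => ?_⟩
    · have := Finset.smul_mem_smul_finset (a := permRep ↑h) hq
      rw [hs1] at this
      exact this
    · have := Finset.smul_mem_smul_finset (a := permRep ↑h) hq
      rw [hs2] at this
      exact this
  -- the key "reach" lemma
  have key : ∀ (l : List (ℤ × ↥(Subgroup.closure {b * a, a * b * b * a⁻¹})))
      (c : ↥(Subgroup.closure {b * a, a * b * b * a⁻¹})),
      ((l.map fun p => p.1.natAbs).sum = 0 → permRep (φ (coprodExpr c l)) 0 = 0) ∧
      ((l.map fun p => p.1.natAbs).sum = 1 → (l.map Prod.fst).sum = 1 →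
        permRep (φ (coprodExpr c l)) 0 ∈ P1) ∧
      ((l.map fun p => p.1.natAbs).sum = 2 → (l.map Prod.fst).sum = 2 →
        permRep (φ (coprodExpr c l)) 0 ∈ P2) := by
    intro l
    induction l with
    | nil =>
      intro c
      rw [coprodExpr_nil, hφinl]
      exact ⟨fun _ => (hHstab c).1, fun h => by simp at h, fun h => by simp at h⟩
    | cons p l ih =>
      obtain ⟨β, d⟩ := p
      intro c
      obtain ⟨ih0, ih1, ih2⟩ := ih d
      have hexp : permRep (φ (coprodExpr c ((β, d) :: l))) 0 =
          permRep ↑c ((permA ^ β) (permRep (φ (coprodExpr d l)) 0)) := by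
        rw [coprodExpr_cons, map_mul φ, map_mul φ, hφinl, hφxpow, map_mul permRep,
          map_mul permRep, map_zpow permRep, hpA]
        rfl
      have hsle : ((l.map Prod.fst).sum).natAbs ≤ (l.map fun p => p.1.natAbs).sum := by
        have h := natAbs_sum_le (l.map Prod.fst)
        rw [List.map_map] at h
        exact h
      refine ⟨?_, ?_, ?_⟩
      · intro h0
        simp only [List.map_cons, List.sum_cons] at h0
        have hc1 : β = 0 ∧ (l.map fun p => p.1.natAbs).sum = 0 := by omega
        rw [hexp, hc1.1, zpow_zero]
        rw [show ((1 : Equiv.Perm (Fin 5)) (permRep (φ (coprodExpr d l)) 0)) =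
          permRep (φ (coprodExpr d l)) 0 from rfl, ih0 hc1.2]
        exact (hHstab c).1
      · intro h0 h1
        simp only [List.map_cons, List.sum_cons] at h0 h1
        have hc1 : (β = 0 ∧ (l.map fun p => p.1.natAbs).sum = 1 ∧ (l.map Prod.fst).sum = 1) ∨
            (β = 1 ∧ (l.map fun p => p.1.natAbs).sum = 0) := by omega
        rcases hc1 with ⟨hβ, hn, hs⟩ | ⟨hβ, hn⟩
        · rw [hexp, hβ, zpow_zero]
          rw [show ((1 : Equiv.Perm (Fin 5)) (permRep (φ (coprodExpr d l)) 0)) =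
            permRep (φ (coprodExpr d l)) 0 from rfl]
          exact (hHstab c).2.1 _ (ih1 hn hs)
        · rw [hexp, hβ, zpow_one, ih0 hn]
          exact (hHstab c).2.1 _ (by decide)
      · intro h0 h1
        simp only [List.map_cons, List.sum_cons] at h0 h1
        have hc1 : (β = 0 ∧ (l.map fun p => p.1.natAbs).sum = 2 ∧ (l.map Prod.fst).sum = 2) ∨
            (β = 1 ∧ (l.map fun p => p.1.natAbs).sum = 1 ∧ (l.map Prod.fst).sum = 1) ∨
            (β = 2 ∧ (l.map fun p => p.1.natAbs).sum = 0) := by omega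
        rcases hc1 with ⟨hβ, hn, hs⟩ | ⟨hβ, hn, hs⟩ | ⟨hβ, hn⟩
        · rw [hexp, hβ, zpow_zero]
          rw [show ((1 : Equiv.Perm (Fin 5)) (permRep (φ (coprodExpr d l)) 0)) =
            permRep (φ (coprodExpr d l)) 0 from rfl]
          exact (hHstab c).2.2 _ (ih2 hn hs)
        · rw [hexp, hβ, zpow_one]
          have hq : permRep (φ (coprodExpr d l)) 0 ∈ P1 := ih1 hn hs
          exact (hHstab c).2.2 _ ((by decide : ∀ q, q ∈ P1 → permA q ∈ P2) _ hq)
        · rw [hexp, hβ, ih0 hn]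
          rw [show ((2 : ℤ)) = 1 + 1 from rfl, zpow_add, zpow_one]
          exact (hHstab c).2.2 _ (by decide)
  -- the exponent-sum homomorphism δ
  set δ := Coprod.lift (1 : ↥(Subgroup.closure {b * a, a * b * b * a⁻¹}) →* Multiplicative ℤ)
      (MonoidHom.id (Multiplicative ℤ)) with hδdef
  have hδconj : ∀ (c w : ↥(Subgroup.closure {b * a, a * b * b * a⁻¹}) ∗ Multiplicative ℤ),
      δ (c * w * c⁻¹) = δ w := by
    intro c w
    rw [map_mul, map_mul, map_inv, mul_comm (δ c) (δ w), mul_inv_cancel_right]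
  have hδw₀ : δ w₀ = Multiplicative.ofAdd (2 : ℤ) := by
    rw [hw₀, hδdef]
    simp only [map_mul, map_inv, Coprod.lift_apply_inl, Coprod.lift_apply_inr,
      MonoidHom.one_apply, MonoidHom.id_apply]
    decide
  have hδ2 : ∀ (c : ↥(Subgroup.closure {b * a, a * b * b * a⁻¹}) ∗ Multiplicative ℤ)
      (h₀ : ↥(Subgroup.closure {b * a, a * b * b * a⁻¹}))
      (l : List (ℤ × ↥(Subgroup.closure {b * a, a * b * b * a⁻¹}))),
      c * w₀ * c⁻¹ = coprodExpr h₀ l → (l.map Prod.fst).sum = 2 := by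
    intro c h₀ l h
    have h1 := congrArg δ h
    rw [hδconj, hδw₀, hδdef, lift_one_coprodExpr] at h1
    have h2 := congrArg Multiplicative.toAdd h1
    simp only [MonoidHom.id_apply, toAdd_ofAdd, toAdd_zpow, xgen, smul_eq_mul, mul_one] at h2
    omega
  -- the parity homomorphism ε
  set ε := Coprod.lift
      (1 : ↥(Subgroup.closure {b * a, a * b * b * a⁻¹}) →* Multiplicative (ZMod 2))
      (AddMonoidHom.toMultiplicative (Int.castAddHom (ZMod 2))) with hεdef
  have hεconj : ∀ (c w : ↥(Subgroup.closure {b * a, a * b * b * a⁻¹}) ∗ Multiplicative ℤ),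
      ε (c * w * c⁻¹) = ε w := by
    intro c w
    rw [map_mul, map_mul, map_inv, mul_comm (ε c) (ε w), mul_inv_cancel_right]
  have hεw₀ : ε w₀ = 1 := by
    rw [hw₀, hεdef]
    simp only [map_mul, map_inv, Coprod.lift_apply_inl, Coprod.lift_apply_inr,
      MonoidHom.one_apply]
    decide
  have hεker : ∀ w ∈ φ.ker, ε w = 1 := by
    intro w hw
    rw [← hkerN] at hw
    have hle : Subgroup.normalClosure {w₀} ≤ ε.ker :=
      Subgroup.normalClosure_le_normal
        (by rw [Set.singleton_subset_iff]; exact MonoidHom.mem_ker.mpr hεw₀)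
    exact (hle hw : _)
  have hparity : ∀ w ∈ φ.ker,
      ∀ (c : ↥(Subgroup.closure {b * a, a * b * b * a⁻¹}) ∗ Multiplicative ℤ)
      (h₀ : ↥(Subgroup.closure {b * a, a * b * b * a⁻¹}))
      (l : List (ℤ × ↥(Subgroup.closure {b * a, a * b * b * a⁻¹}))),
      c * w * c⁻¹ = coprodExpr h₀ l → Even ((l.map fun p => p.1.natAbs).sum) := by
    intro w hw c h₀ l h
    have h1 := congrArg ε h
    rw [hεconj, hεker w hw, hεdef, lift_one_coprodExpr] at h1
    have h2 : (((l.map Prod.fst).sum : ℤ) : ZMod 2) = 0 := by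
      have h3 := congrArg Multiplicative.toAdd h1.symm
      simpa [xgen, toAdd_zpow, Function.comp_def] using h3
    have h3 : (2 : ℤ) ∣ (l.map Prod.fst).sum := by
      rwa [ZMod.intCast_zmod_eq_zero_iff_dvd] at h2
    have h4 : Even ((l.map Prod.fst).sum) := by
      obtain ⟨k, hk⟩ := h3
      exact ⟨k, by omega⟩
    have h5 : (l.map fun p => p.1.natAbs) = (l.map Prod.fst).map Int.natAbs := by
      rw [List.map_map]
      rfl
    rw [h5, even_natAbs_sum]
    exact h4
  have hw₀ker : w₀ ∈ φ.ker := MonoidHom.mem_ker.mpr hφw₀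
  refine ⟨hkerN, ?_, ?_⟩
  · -- degree w₀ = 4
    have h4 : (4 : ℕ) ∈ {n | ∃ (c : ↥(Subgroup.closure {b * a, a * b * b * a⁻¹}) ∗ Multiplicative ℤ)
        (h₀ : ↥(Subgroup.closure {b * a, a * b * b * a⁻¹}))
        (l : List (ℤ × ↥(Subgroup.closure {b * a, a * b * b * a⁻¹}))),
        c * w₀ * c⁻¹ = coprodExpr h₀ l ∧ (l.map fun p => p.1.natAbs).sum = n} := by
      refine ⟨1, 1, [(-1, h₂), (2, h₁⁻¹), (1, h₁⁻¹)], ?_, by norm_num⟩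
      rw [one_mul, inv_one, mul_one, hw₀]
      rw [coprodExpr_cons, coprodExpr_cons, coprodExpr_cons, coprodExpr_nil]
      rw [map_one, one_mul]
      rw [show xgen ^ (-1 : ℤ) = xgen⁻¹ from zpow_neg_one xgen,
        show xgen ^ (2 : ℤ) = xgen * xgen from by rw [show (2:ℤ) = 1 + 1 from rfl, zpow_add, zpow_one],
        zpow_one]
      simp only [map_mul, map_inv, mul_assoc]
    unfold degree
    refine le_antisymm (Nat.sInf_le h4) (le_csInf ⟨4, h4⟩ ?_)
    rintro n ⟨c, h₀, l, hc, rfl⟩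
    have hs : (l.map Prod.fst).sum = 2 := hδ2 c h₀ l hc
    have hev := hparity w₀ hw₀ker c h₀ l hc
    have hge : 2 ≤ (l.map fun p => p.1.natAbs).sum := by
      have h := natAbs_sum_le (l.map Prod.fst)
      rw [List.map_map, hs] at h
      exact h
    have hne : (l.map fun p => p.1.natAbs).sum ≠ 2 := by
      intro h2
      have hφc : φ (coprodExpr h₀ l) = 1 := by
        rw [← hc, map_mul, map_mul, map_inv, hφw₀, mul_one, mul_inv_cancel]
      have hmem := (key l h₀).2.2 h2 hs
      rw [hφc, map_one] at hmem
      exact absurd hmem (by decide)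
    obtain ⟨k, hk⟩ := hev
    omega
  · -- evenness
    intro w hw
    rcases Set.eq_empty_or_nonempty {n | ∃ (c : ↥(Subgroup.closure {b * a, a * b * b * a⁻¹}) ∗ Multiplicative ℤ)
        (h₀ : ↥(Subgroup.closure {b * a, a * b * b * a⁻¹}))
        (l : List (ℤ × ↥(Subgroup.closure {b * a, a * b * b * a⁻¹}))),
        c * w * c⁻¹ = coprodExpr h₀ l ∧ (l.map fun p => p.1.natAbs).sum = n} with he | hne
    · unfold degree
      rw [he, Nat.sInf_empty]
      exact Even.zero
    · have hmem := Nat.sInf_mem hne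
      obtain ⟨c, h₀, l, hc, hsum⟩ := hmem
      have hev := hparity w hw c h₀ l hc
      unfold degree
      rw [← hsum]
      exact hev
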